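/- For a ∈ 𝔻 \ {0}, the point c_-(a) := a · (2 + |a|^2 - √((|a|^2 - 4)(|a|^2 - 1)))/(3|a|^2) is a critical point of B_a(z) = z^3 (z - a)/(1 - \bar{a} z), i.e. B_a'(c_-(a)) = 0. -/

import Mathlib

/-- For `a` in the punctured unit disk, the point
`c₋(a) = a (2 + |a|² − √((|a|²−4)(|a|²−1)))/(3|a|²)` is a critical point of
the Blaschke product `B_a(z) = z^3 (z - a)/(1 - conj a * z)`. -/
theorem blaschke_critical_point_minus (a : ℂ) (ha0 : 0 < ‖a‖) (ha1 : ‖a‖ < 1) :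
    deriv (fun z : ℂ => z ^ 3 * (z - a) / (1 - (starRingEnd ℂ) a * z))
      (a * (((2 + ‖a‖ ^ 2 - Real.sqrt ((‖a‖ ^ 2 - 4) * (‖a‖ ^ 2 - 1))) / (3 * ‖a‖ ^ 2) : ℝ) : ℂ))
      = 0 := by
  set r : ℝ := ‖a‖ with hr
  have hu0 : (0:ℝ) < r ^ 2 := by positivity
  have hu1 : r ^ 2 < 1 := by nlinarith
  set s : ℝ := Real.sqrt ((r ^ 2 - 4) * (r ^ 2 - 1)) with hsdef
  have hsprod : (0:ℝ) ≤ (r ^ 2 - 4) * (r ^ 2 - 1) := by nlinarith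
  have hs2 : s ^ 2 = (r ^ 2 - 4) * (r ^ 2 - 1) := Real.sq_sqrt hsprod
  have hs0 : 0 < s := by
    apply Real.sqrt_pos.mpr; nlinarith
  set tr : ℝ := (2 + r ^ 2 - s) / (3 * r ^ 2) with htr
  -- the real key identity
  have keyR : 3 * r ^ 2 * tr ^ 2 - (4 + 2 * r ^ 2) * tr + 3 = 0 := by
    rw [htr]
    have h3 : (3 : ℝ) * r ^ 2 ≠ 0 := by positivity
    field_simp
    nlinarith [hs2]
  set t : ℂ := (tr : ℂ) with ht
  set u : ℂ := ((r ^ 2 : ℝ) : ℂ) with hudef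
  have keyC : 3 * u * t ^ 2 - (4 + 2 * u) * t + 3 = 0 := by
    rw [ht, hudef]
    exact_mod_cast congrArg (fun x : ℝ => (x : ℂ)) keyR
  have hu : (starRingEnd ℂ) a * a = u := by
    rw [hudef, hr, ← Complex.normSq_eq_norm_sq, mul_comm]
    exact Complex.mul_conj a
  set c : ℂ := a * t with hc
  -- denominator nonzero
  have hrt : r ^ 2 * tr ≠ 1 := by
    have : r ^ 2 * tr = (2 + r ^ 2 - s) / 3 := by
      rw [htr]; field_simp
    rw [this]
    intro h
    have : 2 + r ^ 2 - s = 3 := by linarith [(div_eq_one_iff_eq (by norm_num : (3:ℝ) ≠ 0)).mp h]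
    nlinarith
  have hden : (1 : ℂ) - (starRingEnd ℂ) a * c ≠ 0 := by
    have : (1 : ℂ) - (starRingEnd ℂ) a * c = 1 - ((r ^ 2 * tr : ℝ) : ℂ) := by
      rw [hc, ← mul_assoc, hu, hudef, ht, Complex.ofReal_mul]
    rw [this]
    intro h
    apply hrt
    have h2 : ((r ^ 2 * tr : ℝ) : ℂ) = ((1 : ℝ) : ℂ) := by
      push_cast at h ⊢; linear_combination -h
    exact_mod_cast h2
  -- derivative via quotient rule
  have h1 : HasDerivAt (fun z : ℂ => z ^ 3 * (z - a))
      ((3 : ℕ) * c ^ 2 * (c - a) + c ^ 3 * 1) c := by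
    exact (hasDerivAt_pow 3 c).mul ((hasDerivAt_id c).sub_const a)
  have h2 : HasDerivAt (fun z : ℂ => 1 - (starRingEnd ℂ) a * z)
      (-((starRingEnd ℂ) a * 1)) c := by
    exact (((hasDerivAt_id c).const_mul ((starRingEnd ℂ) a))).const_sub 1
  have hD := h1.div h2 hden
  rw [HasDerivAt.deriv (f := fun z : ℂ => z ^ 3 * (z - a) / (1 - (starRingEnd ℂ) a * z)) hD]
  rw [div_eq_zero_iff]
  left
  rw [hc]
  linear_combination (-(a ^ 3 * t ^ 2)) * keyC + (-3 * a ^ 3 * t ^ 4 + 2 * a ^ 3 * t ^ 3) * hu
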